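/- arXiv:1812.00540 — 3 statements merged into one kernel-verified Lean document; each statement's English description precedes it below -/
import Mathlib

section
/- Let $z_1 = x + iy$ with $y < 0$ and let $\lambda \in \mathbb{R}$. Define $D(\alpha) = \frac{\lambda i}{2\pi} \frac{1}{\overline{\alpha - z_1}}$ for $\alpha \in \mathbb{R}$. Then $\frac{1}{2\pi} \int_{-\infty}^{\infty} \frac{|D(\alpha) - D(\beta)|^2}{(\alpha - \beta)^2} d\beta = \frac{\lambda^2}{4\pi^2} \frac{1}{|\alpha - z_1|^2} \cdot \frac{1}{2|y|}$. -/
open MeasureTheory Complex Real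

lemma cauchy_int (c x : ℝ) (hc : 0 < c) :
    ∫ β : ℝ, ((β - x) ^ 2 + c ^ 2)⁻¹ = π / c := by
  have h1 : (∫ β : ℝ, ((β - x) ^ 2 + c ^ 2)⁻¹) = ∫ β : ℝ, (β ^ 2 + c ^ 2)⁻¹ :=
    integral_sub_right_eq_self (fun β : ℝ => (β ^ 2 + c ^ 2)⁻¹) x
  have h2 : ∀ β : ℝ, (β ^ 2 + c ^ 2)⁻¹ = c⁻¹ * c⁻¹ * (1 + (c⁻¹ * β) ^ 2)⁻¹ := by
    intro β
    have : (0:ℝ) < β ^ 2 + c ^ 2 := by positivity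
    field_simp
    ring
  rw [h1]
  simp_rw [h2]
  rw [MeasureTheory.integral_const_mul, Measure.integral_comp_inv_mul_left
      (fun t : ℝ => (1 + t ^ 2)⁻¹) c, integral_univ_inv_one_add_sq]
  rw [abs_of_pos hc, smul_eq_mul]
  field_simp

/-- The nonlocal quadratic term in the Taylor sign quantity for a single point vortex
`z₁ = x + iy`, `y < 0`, with `D(α) = (λ i / (2π)) / conj(α - z₁)`:
`(1/(2π)) ∫ |D(α)-D(β)|²/(α-β)² dβ = (λ²/(4π²)) (1/|α-z₁|²) (1/(2|y|))`. -/
theorem stmt1 (x y lam : ℝ) (hy : y < 0) (z₁ : ℂ) (hz : z₁ = (x : ℂ) + (y : ℂ) * I)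
    (D : ℝ → ℂ)
    (hD : ∀ α : ℝ, D α = (lam : ℂ) * I / (2 * (π : ℂ)) *
        (1 / (starRingEnd ℂ) ((α : ℂ) - z₁)))
    (α : ℝ) :
    1 / (2 * π) * ∫ β : ℝ, ‖D α - D β‖ ^ 2 / (α - β) ^ 2 =
      lam ^ 2 / (4 * π ^ 2) * (1 / ‖(α : ℂ) - z₁‖ ^ 2) * (1 / (2 * |y|)) := by
  have hπ : (π:ℝ) ≠ 0 := Real.pi_ne_zero
  have hne : ∀ β : ℝ, ((β : ℂ) - z₁) ≠ 0 := by
    intro β h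
    have := congrArg Complex.im h
    simp [hz] at this
    linarith
  have hN : ∀ β : ℝ, normSq ((β : ℂ) - z₁) = (β - x) ^ 2 + y ^ 2 := by
    intro β
    simp [hz, Complex.normSq_apply]
    ring
  have hNpos : ∀ β : ℝ, (0:ℝ) < (β - x) ^ 2 + y ^ 2 := by
    intro β
    nlinarith [sq_nonneg (β - x), mul_pos_of_neg_of_neg hy hy]
  set K : ℝ := lam ^ 2 / (4 * π ^ 2) * (1 / ((α - x) ^ 2 + y ^ 2)) with hK
  have key : ∀ β : ℝ, β ≠ α →
      (‖D α - D β‖) ^ 2 / (α - β) ^ 2 = K * ((β - x) ^ 2 + y ^ 2)⁻¹ := by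
    intro β hβ
    have h1 : (starRingEnd ℂ) ((α : ℂ) - z₁) ≠ 0 := by
      simp only [ne_eq, map_eq_zero]; exact hne α
    have h2 : (starRingEnd ℂ) ((β : ℂ) - z₁) ≠ 0 := by
      simp only [ne_eq, map_eq_zero]; exact hne β
    have hdiff : D α - D β = (lam : ℂ) * I / (2 * (π : ℂ)) *
        ((starRingEnd ℂ) ((β : ℂ) - (α : ℂ)) /
          ((starRingEnd ℂ) ((α : ℂ) - z₁) * (starRingEnd ℂ) ((β : ℂ) - z₁))) := by
      rw [hD, hD, ← mul_sub]
      congr 1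
      rw [div_sub_div _ _ h1 h2]
      congr 1
      simp only [one_mul, mul_one, map_sub]
      ring
    have habs : (‖D α - D β‖) ^ 2 = normSq (D α - D β) := Complex.sq_norm _
    have hβα : normSq ((β : ℂ) - (α : ℂ)) = (α - β) ^ 2 := by
      rw [← Complex.ofReal_sub, Complex.normSq_ofReal]
      ring
    have h4 : normSq (2 : ℂ) = 4 := by
      simp [Complex.normSq_apply]
      norm_num
    rw [habs, hdiff]
    simp only [map_div₀, map_mul, Complex.normSq_conj, Complex.normSq_I,
      Complex.normSq_ofReal, hN, hβα, h4]
    have hαβ : ((α : ℝ) - β) ^ 2 ≠ 0 :=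
      pow_ne_zero 2 (sub_ne_zero.mpr (Ne.symm hβ))
    have hNα := (hNpos α).ne'
    have hNβ := (hNpos β).ne'
    rw [hK]
    field_simp
  have hae : (fun β : ℝ => (‖D α - D β‖) ^ 2 / (α - β) ^ 2) =ᵐ[volume]
      (fun β : ℝ => K * ((β - x) ^ 2 + y ^ 2)⁻¹) := by
    have h0 : ∀ᵐ β : ℝ, β ≠ α := by
      rw [ae_iff]
      have hs : {β : ℝ | ¬ β ≠ α} = {α} := by ext β; simp
      rw [hs]
      exact measure_singleton α
    filter_upwards [h0] with β hβ
    exact key β hβ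
  rw [integral_congr_ae hae, MeasureTheory.integral_const_mul]
  have hy2 : y ^ 2 = (-y) ^ 2 := by ring
  simp_rw [hy2]
  rw [cauchy_int (-y) x (by linarith)]
  have hAbs : (‖(α : ℂ) - z₁‖) ^ 2 = (α - x) ^ 2 + y ^ 2 := by
    rw [Complex.sq_norm, hN]
  rw [hAbs, hK, abs_of_neg hy]
  set N : ℝ := (α - x) ^ 2 + y ^ 2 with hNdef
  have hN0 : N ≠ 0 := (hNpos α).ne'
  have hy0 : y ≠ 0 := hy.ne
  field_simp
end

section
/- Let $N \geq 1$, let $z_1, \ldots, z_N$ be complex numbers in the lower half plane, and let $\lambda_1, \ldots, \lambda_N \in \mathbb{R}$. Define $D(\alpha) = \sum_{j=1}^N \frac{\lambda_j i}{2\pi} \frac{1}{\overline{\alpha - z_j}}$ for $\alpha \in \mathbb{R}$. Then for every $\alpha \in \mathbb{R}$, $\frac{1}{2\pi} \int_{-\infty}^{\infty} \frac{|D(\alpha) - D(\beta)|^2}{(\alpha - \beta)^2} d\beta = \sum_{1 \leq j, k \leq N} \frac{\lambda_j \lambda_k}{(2\pi)^2} \frac{1}{(\alpha - z_j)\overline{(\alpha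 - z_k)}} \cdot \frac{i}{\overline{z_k} - z_j}$. -/
open MeasureTheory Complex Real

open Filter


private lemma sub_ne_of_im (x : ℝ) {w : ℂ} (hw : w.im ≠ 0) : (x : ℂ) - w ≠ 0 := by
  intro h
  apply hw
  have := congrArg Complex.im h
  simpa using this.symm

private lemma vort_integrable {w z : ℂ} (hw : w.im ≠ 0) (hz : z.im ≠ 0) :
    Integrable (fun x : ℝ => ((x : ℂ) - w)⁻¹ * ((x : ℂ) - z)⁻¹) := by
  set C₁ : ℝ := 2 + (2 * w.re ^ 2 + 1) / w.im ^ 2 with hC₁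
  set C₂ : ℝ := 2 + (2 * z.re ^ 2 + 1) / z.im ^ 2 with hC₂
  have hw2 : 0 < w.im ^ 2 := by positivity
  have hz2 : 0 < z.im ^ 2 := by positivity
  have hC₁0 : 0 ≤ C₁ := by positivity
  have hC₂0 : 0 ≤ C₂ := by positivity
  have hb : ∀ (v : ℂ), v.im ≠ 0 → ∀ x : ℝ,
      1 + x ^ 2 ≤ (2 + (2 * v.re ^ 2 + 1) / v.im ^ 2) * Complex.normSq ((x : ℂ) - v) := by
    intro v hv x
    have hv2 : 0 < v.im ^ 2 := by positivity
    have hns : Complex.normSq ((x : ℂ) - v) = (x - v.re) ^ 2 + v.im ^ 2 := by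
      simp [Complex.normSq_apply, Complex.sub_re, Complex.sub_im]
      ring
    rw [hns]
    have key : (2 * v.re ^ 2 + 1) / v.im ^ 2 * v.im ^ 2 = 2 * v.re ^ 2 + 1 :=
      div_mul_cancel₀ _ hv2.ne'
    nlinarith [sq_nonneg (x - 2 * v.re),
      mul_nonneg (div_nonneg (by positivity : (0:ℝ) ≤ 2 * v.re ^ 2 + 1) hv2.le)
        (sq_nonneg (x - v.re))]
  have hcont : Continuous (fun x : ℝ => ((x : ℂ) - w)⁻¹ * ((x : ℂ) - z)⁻¹) := by
    apply Continuous.mul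
    · exact (Complex.continuous_ofReal.sub continuous_const).inv₀ fun x => sub_ne_of_im x hw
    · exact (Complex.continuous_ofReal.sub continuous_const).inv₀ fun x => sub_ne_of_im x hz
  have hgint : Integrable (fun x : ℝ => Real.sqrt (C₁ * C₂) * (1 + x ^ 2)⁻¹) :=
    integrable_inv_one_add_sq.const_mul _
  refine hgint.mono' hcont.aestronglyMeasurable (.of_forall fun x => ?_)
  have hx2 : (0 : ℝ) < 1 + x ^ 2 := by positivity
  have habsw : (0:ℝ) < ‖(x : ℂ) - w‖ := by
    simpa using (norm_pos_iff.mpr (sub_ne_of_im x hw))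
  have habsz : (0:ℝ) < ‖(x : ℂ) - z‖ := by
    simpa using (norm_pos_iff.mpr (sub_ne_of_im x hz))
  have hsq : (1 + x ^ 2) ^ 2 ≤
      (C₁ * C₂) * (Complex.normSq ((x : ℂ) - w) * Complex.normSq ((x : ℂ) - z)) := by
    have h1 := hb w hw x
    have h2 := hb z hz x
    rw [← hC₁] at h1
    rw [← hC₂] at h2
    calc (1 + x ^ 2) ^ 2 = (1 + x ^ 2) * (1 + x ^ 2) := sq (1 + x^2) ▸ rfl
      _ ≤ (C₁ * Complex.normSq ((x : ℂ) - w)) * (C₂ * Complex.normSq ((x : ℂ) - z)) := by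
          exact mul_le_mul h1 h2 hx2.le (mul_nonneg hC₁0 (Complex.normSq_nonneg _))
      _ = _ := by ring
  have step : 1 + x ^ 2 ≤ Real.sqrt (C₁ * C₂) *
      (‖(x : ℂ) - w‖ * ‖(x : ℂ) - z‖) := by
    calc 1 + x ^ 2 = Real.sqrt ((1 + x ^ 2) ^ 2) := (Real.sqrt_sq hx2.le).symm
      _ ≤ Real.sqrt ((C₁ * C₂) * (Complex.normSq ((x : ℂ) - w) * Complex.normSq ((x : ℂ) - z))) :=
          Real.sqrt_le_sqrt hsq
      _ = _ := by
          rw [Real.sqrt_mul (by positivity), Real.sqrt_mul (Complex.normSq_nonneg _)]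
          rw [Complex.norm_def, Complex.norm_def]
  have : ‖((x : ℂ) - w)⁻¹ * ((x : ℂ) - z)⁻¹‖
      = (‖(x : ℂ) - w‖ * ‖(x : ℂ) - z‖)⁻¹ := by
    simp [norm_mul, mul_inv, mul_comm]
  rw [this, inv_eq_one_div, mul_comm (Real.sqrt (C₁ * C₂)) (1 + x ^ 2)⁻¹,
    ← div_eq_inv_mul]
  exact (div_le_div_iff₀ (by positivity) hx2).mpr (by linarith)

private lemma tendsto_ratio (a c : ℝ) {b d : ℝ} (hd : d ≠ 0) (l : Filter ℝ)
    (hinv : Filter.Tendsto (fun x : ℝ => x⁻¹) l (nhds 0)) (hne : ∀ᶠ x in l, x ≠ 0) :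
    Filter.Tendsto (fun x : ℝ => ((x - a) ^ 2 + b ^ 2) / ((x - c) ^ 2 + d ^ 2)) l (nhds 1) := by
  have hnum : ∀ p q : ℝ, Filter.Tendsto
      (fun x : ℝ => (1 - p * x⁻¹) ^ 2 + (q * x⁻¹) ^ 2) l (nhds 1) := by
    intro p q
    have h1 : Filter.Tendsto (fun x : ℝ => p * x⁻¹) l (nhds 0) := by
      simpa using hinv.const_mul p
    have h2 : Filter.Tendsto (fun x : ℝ => q * x⁻¹) l (nhds 0) := by
      simpa using hinv.const_mul q
    have h3 := (((tendsto_const_nhds (x := (1:ℝ))).sub h1).pow 2).add (h2.pow 2)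
    norm_num at h3
    exact h3
  have h4 := (hnum a b).div (hnum c d) one_ne_zero
  norm_num at h4
  refine h4.congr' ?_
  filter_upwards [hne] with x hx
  have hdx : d * x⁻¹ ≠ 0 := mul_ne_zero hd (inv_ne_zero hx)
  have hq1 : (1 - c * x⁻¹) ^ 2 + (d * x⁻¹) ^ 2 ≠ 0 := by positivity
  have hq2 : (x - c) ^ 2 + d ^ 2 ≠ 0 := by positivity
  simp only [Pi.div_apply]
  field_simp

private lemma hasDerivAt_log_q (a : ℝ) {b : ℝ} (hb : b ≠ 0) (x : ℝ) :
    HasDerivAt (fun x : ℝ => Real.log ((x - a) ^ 2 + b ^ 2) / 2)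
      ((x - a) / ((x - a) ^ 2 + b ^ 2)) x := by
  have hq : 0 < (x - a) ^ 2 + b ^ 2 := by positivity
  have hinner : HasDerivAt (fun x : ℝ => (x - a) ^ 2 + b ^ 2) (2 * (x - a)) x := by
    have h := (((hasDerivAt_id x).sub_const a).pow 2).add_const (b ^ 2)
    simpa [mul_comm] using h
  have h2 := ((Real.hasDerivAt_log hq.ne').comp x hinner).div_const 2
  refine h2.congr_deriv ?_
  field_simp

private lemma hasDerivAt_arctan_q (a : ℝ) {b : ℝ} (hb : b ≠ 0) (x : ℝ) :
    HasDerivAt (fun x : ℝ => Real.arctan ((x - a) / b)) (b / ((x - a) ^ 2 + b ^ 2)) x := by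
  have hq : 0 < (x - a) ^ 2 + b ^ 2 := by positivity
  have hinner : HasDerivAt (fun x : ℝ => (x - a) / b) (1 / b) x := by
    simpa using ((hasDerivAt_id x).sub_const a).div_const b
  have h2 := (Real.hasDerivAt_arctan ((x - a) / b)).comp x hinner
  refine h2.congr_deriv ?_
  field_simp
  ring

private lemma inv_eq_reim {w : ℂ} (hw : w.im ≠ 0) (x : ℝ) :
    ((x : ℂ) - w)⁻¹ = (((x - w.re) / ((x - w.re) ^ 2 + w.im ^ 2) : ℝ) : ℂ)
      + ((w.im / ((x - w.re) ^ 2 + w.im ^ 2) : ℝ) : ℂ) * I := by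
  have hq : (x - w.re) ^ 2 + w.im ^ 2 ≠ 0 := by positivity
  have hqc : ((x : ℂ) - (w.re : ℂ)) ^ 2 + (w.im : ℂ) ^ 2 ≠ 0 := by
    intro h
    apply hq
    have : (((x - w.re) ^ 2 + w.im ^ 2 : ℝ) : ℂ) = 0 := by push_cast; linear_combination h
    exact_mod_cast this
  have hns : Complex.normSq ((x : ℂ) - w) = (x - w.re) ^ 2 + w.im ^ 2 := by
    simp [Complex.normSq_apply, Complex.sub_re, Complex.sub_im]
    ring
  have hcw : (starRingEnd ℂ) w = (w.re : ℂ) - (w.im : ℂ) * I := by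
    apply Complex.ext <;> simp
  rw [Complex.inv_def, hns, map_sub, Complex.conj_ofReal, hcw]
  push_cast
  field_simp
  ring

private lemma tendsto_arctan_aff_top {b : ℝ} (a : ℝ) (hb : 0 < b) :
    Filter.Tendsto (fun x : ℝ => Real.arctan ((x - a) / b)) Filter.atTop (nhds (π / 2)) := by
  have hu : Filter.Tendsto (fun x : ℝ => (x - a) / b) Filter.atTop Filter.atTop := by
    have := tendsto_atTop_add_const_right Filter.atTop (-a) tendsto_id
    simpa [sub_eq_add_neg] using this.atTop_div_const hb
  exact (tendsto_nhds_of_tendsto_nhdsWithin Real.tendsto_arctan_atTop).comp hu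

private lemma tendsto_arctan_aff_bot {b : ℝ} (a : ℝ) (hb : 0 < b) :
    Filter.Tendsto (fun x : ℝ => Real.arctan ((x - a) / b)) Filter.atBot (nhds (-(π / 2))) := by
  have hu : Filter.Tendsto (fun x : ℝ => (x - a) / b) Filter.atBot Filter.atBot := by
    have h1 : Filter.Tendsto (fun x : ℝ => x - a) Filter.atBot Filter.atBot := by
      simpa [sub_eq_add_neg] using tendsto_atBot_add_const_right Filter.atBot (-a) tendsto_id
    exact h1.atBot_div_const hb
  exact (tendsto_nhds_of_tendsto_nhdsWithin Real.tendsto_arctan_atBot).comp hu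

private lemma tendsto_inv_atBot_zero'' : Filter.Tendsto (fun x : ℝ => x⁻¹) Filter.atBot (nhds 0) := by
  have h := (tendsto_inv_atTop_zero (𝕜 := ℝ)).comp tendsto_neg_atBot_atTop
  have h2 := h.neg
  norm_num at h2
  refine h2.congr fun x => ?_
  rfl

private lemma vort_diff_integral {w z : ℂ} (hw : 0 < w.im) (hz : z.im < 0) :
    ∫ x : ℝ, (((x : ℂ) - w)⁻¹ - ((x : ℂ) - z)⁻¹) = 2 * π * I := by
  have hb : w.im ≠ 0 := hw.ne'
  have hd : z.im ≠ 0 := hz.ne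
  set R : ℝ → ℝ := fun x =>
    Real.log ((x - w.re) ^ 2 + w.im ^ 2) / 2 - Real.log ((x - z.re) ^ 2 + z.im ^ 2) / 2 with hR
  set A : ℝ → ℝ := fun x =>
    Real.arctan ((x - w.re) / w.im) - Real.arctan ((x - z.re) / z.im) with hA
  set F : ℝ → ℂ := fun x => (R x : ℂ) + (A x : ℂ) * I with hF
  have hFd : ∀ x : ℝ, HasDerivAt F (((x : ℂ) - w)⁻¹ - ((x : ℂ) - z)⁻¹) x := by
    intro x
    have h1 := (hasDerivAt_log_q w.re hb x).sub (hasDerivAt_log_q z.re hd x)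
    have h2 := (hasDerivAt_arctan_q w.re hb x).sub (hasDerivAt_arctan_q z.re hd x)
    have h3 := (h1.ofReal_comp).add ((h2.ofReal_comp).mul_const I)
    refine h3.congr_deriv ?_
    rw [inv_eq_reim hb x, inv_eq_reim hd x]
    push_cast
    ring
  have hint : Integrable (fun x : ℝ => ((x : ℂ) - w)⁻¹ - ((x : ℂ) - z)⁻¹) := by
    have h := (vort_integrable hb hd).const_mul (w - z)
    refine h.congr (Filter.Eventually.of_forall fun x => ?_)
    have hxw := sub_ne_of_im x hb
    have hxz := sub_ne_of_im x hd
    field_simp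
    ring
  have hRlim : ∀ l : Filter ℝ, Filter.Tendsto (fun x : ℝ => x⁻¹) l (nhds 0) →
      (∀ᶠ x in l, x ≠ 0) → Filter.Tendsto R l (nhds 0) := by
    intro l hinv hne
    have hratio := tendsto_ratio (b := w.im) (d := z.im) w.re z.re hd l hinv hne
    have hlog := (Real.continuousAt_log one_ne_zero).tendsto.comp hratio
    rw [Real.log_one] at hlog
    have h2 := hlog.div_const 2
    rw [zero_div] at h2
    refine h2.congr fun x => ?_
    show Real.log (((x - w.re) ^ 2 + w.im ^ 2) / ((x - z.re) ^ 2 + z.im ^ 2)) / 2 = R x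
    rw [Real.log_div (by positivity) (by positivity), hR]
    ring
  have harc2top : Filter.Tendsto (fun x : ℝ => Real.arctan ((x - z.re) / z.im))
      Filter.atTop (nhds (-(π / 2))) := by
    have h2 := (tendsto_arctan_aff_top (b := -z.im) z.re (by linarith)).neg
    refine h2.congr fun x => ?_
    show -Real.arctan ((x - z.re) / -z.im) = Real.arctan ((x - z.re) / z.im)
    rw [← Real.arctan_neg, div_neg, neg_neg]
  have harc2bot : Filter.Tendsto (fun x : ℝ => Real.arctan ((x - z.re) / z.im))
      Filter.atBot (nhds (π / 2)) := by
    have h2 := (tendsto_arctan_aff_bot (b := -z.im) z.re (by linarith)).neg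
    refine Filter.Tendsto.congr (f₁ := fun x => -Real.arctan ((x - z.re) / -z.im)) ?_ ?_
    · intro x
      show -Real.arctan ((x - z.re) / -z.im) = Real.arctan ((x - z.re) / z.im)
      rw [← Real.arctan_neg, div_neg, neg_neg]
    · simpa using h2
  have hAtop : Filter.Tendsto A Filter.atTop (nhds π) := by
    have h := (tendsto_arctan_aff_top w.re hw).sub harc2top
    have : π / 2 - -(π / 2) = π := by ring
    rwa [this] at h
  have hAbot : Filter.Tendsto A Filter.atBot (nhds (-π)) := by
    have h := (tendsto_arctan_aff_bot w.re hw).sub harc2bot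
    have : -(π / 2) - π / 2 = -π := by ring
    rwa [this] at h
  have hFtop : Filter.Tendsto F Filter.atTop (nhds ((π : ℂ) * I)) := by
    have h := ((Complex.continuous_ofReal.tendsto _).comp
        (hRlim _ tendsto_inv_atTop_zero (Filter.eventually_ne_atTop 0))).add
      (((Complex.continuous_ofReal.tendsto _).comp hAtop).mul_const I)
    simpa using h
  have hFbot : Filter.Tendsto F Filter.atBot (nhds (-((π : ℂ) * I))) := by
    have h := ((Complex.continuous_ofReal.tendsto _).comp
        (hRlim _ tendsto_inv_atBot_zero'' (Filter.eventually_ne_atBot 0))).add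
      (((Complex.continuous_ofReal.tendsto _).comp hAbot).mul_const I)
    simpa using h
  have hkey := integral_of_hasDerivAt_of_tendsto hFd hint hFbot hFtop
  rw [hkey]
  ring

private lemma vort_integral {w z : ℂ} (hw : 0 < w.im) (hz : z.im < 0) :
    ∫ x : ℝ, ((x : ℂ) - w)⁻¹ * ((x : ℂ) - z)⁻¹ = 2 * π * I / (w - z) := by
  have hwz : w - z ≠ 0 := by
    intro h
    rw [sub_eq_zero] at h
    rw [h] at hw
    linarith
  have h1 : (w - z) * ∫ x : ℝ, ((x : ℂ) - w)⁻¹ * ((x : ℂ) - z)⁻¹ = 2 * π * I := by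
    rw [← integral_const_mul]
    rw [← vort_diff_integral hw hz]
    refine integral_congr_ae (Filter.Eventually.of_forall fun x => ?_)
    have hxw := sub_ne_of_im x hw.ne'
    have hxz := sub_ne_of_im x hz.ne
    field_simp
    ring
  rw [eq_div_iff hwz, mul_comm]
  exact h1


/-- For `N` point vortices `z j` in the lower half plane with strengths `λ j`, and
`D(α) = ∑ j (λ j i / (2π)) / conj(α - z j)`, for every real `α`:
`(1/(2π)) ∫ |D(α)-D(β)|²/(α-β)² dβ
  = ∑_{j,k} (λ j λ k/(2π)²) (1/((α - z j) conj(α - z k))) (i/(conj(z k) - z j))`. -/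
theorem stmt2 (N : ℕ) (hN : 1 ≤ N) (z : Fin N → ℂ) (hz : ∀ j, (z j).im < 0)
    (lam : Fin N → ℝ) (D : ℝ → ℂ)
    (hD : ∀ α : ℝ, D α = ∑ j, (lam j : ℂ) * I / (2 * (π : ℂ)) *
        (1 / (starRingEnd ℂ) ((α : ℂ) - z j)))
    (α : ℝ) :
    ((1 / (2 * π) * ∫ β : ℝ, (‖D α - D β‖) ^ 2 / (α - β) ^ 2 : ℝ) : ℂ) =
      ∑ j, ∑ k, (lam j : ℂ) * (lam k : ℂ) / (2 * (π : ℂ)) ^ 2 *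
        (1 / (((α : ℂ) - z j) * (starRingEnd ℂ) ((α : ℂ) - z k))) *
        (I / ((starRingEnd ℂ) (z k) - z j)) := by
  have hπ : (π : ℂ) ≠ 0 := by exact_mod_cast Real.pi_ne_zero
  set w : Fin N → ℂ := fun j => (starRingEnd ℂ) (z j) with hw_def
  have hw_eq : ∀ j, (starRingEnd ℂ) (z j) = w j := fun j => rfl
  have hw : ∀ j, 0 < (w j).im := fun j => by
    rw [hw_def]
    simpa using neg_pos.mpr (hz j)
  have hne_w : ∀ (t : ℝ) (j : Fin N), (t : ℂ) - w j ≠ 0 := fun t j => sub_ne_of_im t (hw j).ne'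
  have hne_z : ∀ (t : ℝ) (j : Fin N), (t : ℂ) - z j ≠ 0 := fun t j => sub_ne_of_im t (hz j).ne
  have hwz : ∀ j k, w j - z k ≠ 0 := by
    intro j k h
    have h2 := congrArg Complex.im h
    rw [hw_def] at h2
    simp [Complex.sub_im] at h2
    have := hz j; have := hz k
    linarith
  set T : ℝ → ℂ := fun β => ∑ j, ∑ k,
      ((lam j : ℂ) * I / (2 * (π : ℂ))) * ((lam k : ℂ) * (-I) / (2 * (π : ℂ)))
          / (((α : ℂ) - w j) * ((α : ℂ) - z k))
        * (((β : ℂ) - w j)⁻¹ * ((β : ℂ) - z k)⁻¹) with hT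
  have hgint : ∀ (j k : Fin N),
      Integrable (fun β : ℝ => ((β : ℂ) - w j)⁻¹ * ((β : ℂ) - z k)⁻¹) :=
    fun j k => vort_integrable (hw j).ne' (hz k).ne
  -- pointwise identity away from β = α
  have hpt : ∀ β : ℝ, β ≠ α →
      (((‖D α - D β‖) ^ 2 / (α - β) ^ 2 : ℝ) : ℂ) = T β := by
    intro β hβ
    have hαβ : (α : ℂ) - (β : ℂ) ≠ 0 := by
      rw [sub_ne_zero]
      exact_mod_cast (Ne.symm hβ)
    have hDab : D α - D β = ((β : ℂ) - (α : ℂ)) *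
        ∑ j, ((lam j : ℂ) * I / (2 * (π : ℂ))) *
          (((α : ℂ) - w j)⁻¹ * ((β : ℂ) - w j)⁻¹) := by
      rw [hD α, hD β, ← Finset.sum_sub_distrib, Finset.mul_sum]
      refine Finset.sum_congr rfl fun j _ => ?_
      simp only [map_sub, Complex.conj_ofReal, hw_eq]
      have h1 := hne_w α j
      have h2 := hne_w β j
      have h2π : 2 * (π : ℂ) ≠ 0 := by simp [hπ]
      field_simp
      ring
    have hconjD : (starRingEnd ℂ) (D α - D β) = ((β : ℂ) - (α : ℂ)) *
        ∑ k, ((lam k : ℂ) * (-I) / (2 * (π : ℂ))) *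
          (((α : ℂ) - z k)⁻¹ * ((β : ℂ) - z k)⁻¹) := by
      rw [hDab, map_mul, map_sum]
      congr 1
      · rw [map_sub, Complex.conj_ofReal, Complex.conj_ofReal]
      refine Finset.sum_congr rfl fun j _ => ?_
      simp [map_mul, map_div₀, map_inv₀, map_sub, Complex.conj_ofReal, Complex.conj_I,
        map_ofNat, hw_def]
    have habs : (((‖D α - D β‖) ^ 2 : ℝ) : ℂ)
        = (D α - D β) * (starRingEnd ℂ) (D α - D β) := by
      rw [Complex.sq_norm, Complex.mul_conj]
    have e1 : (((‖D α - D β‖) ^ 2 / (α - β) ^ 2 : ℝ) : ℂ)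
        = ((D α - D β) * (starRingEnd ℂ) (D α - D β)) / ((α : ℂ) - (β : ℂ)) ^ 2 := by
      rw [← habs]
      push_cast
      ring
    rw [e1, hconjD, hDab]
    have hcancel : ∀ u v : ℂ, (((β:ℂ) - α) * u) * (((β:ℂ) - α) * v) / ((α:ℂ) - β) ^ 2
        = u * v := by
      intro u v
      rw [div_eq_iff (pow_ne_zero 2 hαβ)]
      ring
    rw [hcancel, Finset.sum_mul_sum, hT]
    refine Finset.sum_congr rfl fun j _ => Finset.sum_congr rfl fun k _ => ?_
    simp only [div_eq_mul_inv, mul_inv]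
    ring
  -- almost-everywhere identity
  have h0 : ∀ᵐ β : ℝ, β ≠ α := by
    rw [MeasureTheory.ae_iff]
    simp only [not_not, Set.setOf_eq_eq_singleton]
    exact measure_singleton α
  have hae : (fun β : ℝ => (((‖D α - D β‖) ^ 2 / (α - β) ^ 2 : ℝ) : ℂ))
      =ᵐ[volume] T := by
    filter_upwards [h0] with β hβ
    exact hpt β hβ
  -- compute the integral
  have hTint1 : ∀ j : Fin N, Integrable (fun β : ℝ => ∑ k,
      ((lam j : ℂ) * I / (2 * (π : ℂ))) * ((lam k : ℂ) * (-I) / (2 * (π : ℂ)))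
          / (((α : ℂ) - w j) * ((α : ℂ) - z k))
        * (((β : ℂ) - w j)⁻¹ * ((β : ℂ) - z k)⁻¹)) :=
    fun j => integrable_finset_sum _ (fun k _ => (hgint j k).const_mul _)
  rw [Complex.ofReal_mul]
  rw [show ((∫ β : ℝ, (‖D α - D β‖) ^ 2 / (α - β) ^ 2 : ℝ) : ℂ)
      = ∫ β : ℝ, (((‖D α - D β‖) ^ 2 / (α - β) ^ 2 : ℝ) : ℂ)
    from integral_ofReal.symm]
  rw [integral_congr_ae hae, hT]
  rw [MeasureTheory.integral_finset_sum _ (fun j _ => hTint1 j)]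
  have hint2 : ∀ j : Fin N, (∫ β : ℝ, ∑ k,
      ((lam j : ℂ) * I / (2 * (π : ℂ))) * ((lam k : ℂ) * (-I) / (2 * (π : ℂ)))
          / (((α : ℂ) - w j) * ((α : ℂ) - z k))
        * (((β : ℂ) - w j)⁻¹ * ((β : ℂ) - z k)⁻¹))
      = ∑ k, ((lam j : ℂ) * I / (2 * (π : ℂ))) * ((lam k : ℂ) * (-I) / (2 * (π : ℂ)))
          / (((α : ℂ) - w j) * ((α : ℂ) - z k)) * (2 * π * I / (w j - z k)) := by
    intro j
    rw [MeasureTheory.integral_finset_sum _ (fun k _ => (hgint j k).const_mul _)]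
    refine Finset.sum_congr rfl fun k _ => ?_
    rw [integral_const_mul, vort_integral (hw j) (hz k)]
  rw [Finset.sum_congr rfl fun j _ => hint2 j]
  -- final algebra
  conv_rhs => rw [Finset.sum_comm]
  rw [Finset.mul_sum]
  refine Finset.sum_congr rfl fun j _ => ?_
  rw [Finset.mul_sum]
  refine Finset.sum_congr rfl fun k _ => ?_
  simp only [map_sub, Complex.conj_ofReal, hw_eq]
  have h2π : 2 * (π : ℂ) ≠ 0 := by simp [hπ]
  have h1 := hne_w α j
  have h2 := hne_z α k
  have h3 := hwz j k
  push_cast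
  rw [show ((lam j : ℂ) * I / (2 * (π : ℂ))) * ((lam k : ℂ) * (-I) / (2 * (π : ℂ)))
      = (lam j : ℂ) * (lam k : ℂ) / (2 * (π : ℂ)) ^ 2 from by
    rw [div_mul_div_comm,
      show ((lam j : ℂ) * I) * ((lam k : ℂ) * (-I)) = (lam j : ℂ) * (lam k : ℂ) from by
        linear_combination (-(lam j : ℂ) * (lam k : ℂ)) * Complex.I_mul_I,
      show (2 * (π : ℂ)) * (2 * (π : ℂ)) = (2 * (π : ℂ)) ^ 2 from (sq _).symm]]
  rw [mul_comm ((α : ℂ) - z k) ((α : ℂ) - w j), mul_comm ((lam k : ℂ)) ((lam j : ℂ))]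
  have key : ∀ C P Q : ℂ, 1 / (2 * (π : ℂ)) * (C / P * (2 * (π : ℂ) * I / Q))
      = C * (1 / P) * (I / Q) := by
    intro C P Q
    rcases eq_or_ne P 0 with hP | hP
    · simp [hP]
    rcases eq_or_ne Q 0 with hQ | hQ
    · simp [hQ]
    field_simp
  exact key _ _ _
end

section
/- Let $\lambda \in \mathbb{R}$, $x \in \mathbb{R}$, $y < 0$, and consider a single point vortex at $z_1 = x + iy$ below the flat interface $\mathbb{R}$, generating velocity $v(\alpha) = \frac{\lambda i}{2\pi} \frac{1}{\overline{\alpha - z_1}}$ on the interface. Define $A_1(\alpha) = 1 + \frac{\lambda^2}{4\pi^2}\frac{1}{|\alpha - z_1|^2}\frac{1}{2|y|} + \frac{\lambda^2}{2\pi^2}\frac{y}{|\alpha - z_1|^4}$. Then: (1) if $\frac{\lambda^2}{|y|^3} < \frac{8\pi^2}{3}$, then $\inf_{\alpha \in \mathbb{R}} A_1(\alpha) \geq 1 - \frac{3}{8\pi^2}\frac{\lambda^2}{|y|^3} > 0$; (2) if $\frac{\lambda^2}{|y|^3} > \frac{8\pi^2}{3}$, then there exists $\alpha \in \mathbb{R}$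 with $A_1(\alpha) < 0$; (3) if $\frac{\lambda^2}{|y|^3} = \frac{8\pi^2}{3}$, then $A_1(\alpha) > 0$ for all $\alpha \neq x$, and $A_1(x) = 0$. -/
open Complex Real

/-- Taylor sign quantity for a single point vortex `z₁ = x + iy`, `y < 0`, below the flat
interface: with
`A₁(α) = 1 + (λ²/(4π²))(1/|α-z₁|²)(1/(2|y|)) + (λ²/(2π²)) y/|α-z₁|⁴`,
(1) if `λ²/|y|³ < 8π²/3` then `inf A₁ ≥ 1 - (3/(8π²)) λ²/|y|³ > 0`;
(2) if `λ²/|y|³ > 8π²/3` then `A₁` is somewhere negative;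
(3) if `λ²/|y|³ = 8π²/3` then `A₁ > 0` away from `α = x` and `A₁(x) = 0`. -/
theorem stmt3 (x y lam : ℝ) (hy : y < 0) (z₁ : ℂ) (hz : z₁ = (x : ℂ) + (y : ℂ) * I)
    (A₁ : ℝ → ℝ)
    (hA : ∀ α : ℝ, A₁ α =
        1 + lam ^ 2 / (4 * π ^ 2) * (1 / (‖(α : ℂ) - z₁‖) ^ 2) * (1 / (2 * |y|))
          + lam ^ 2 / (2 * π ^ 2) * (y / (‖(α : ℂ) - z₁‖) ^ 4)) :
    (lam ^ 2 / |y| ^ 3 < 8 * π ^ 2 / 3 →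
      0 < 1 - 3 / (8 * π ^ 2) * (lam ^ 2 / |y| ^ 3) ∧
        ∀ α : ℝ, 1 - 3 / (8 * π ^ 2) * (lam ^ 2 / |y| ^ 3) ≤ A₁ α) ∧
    (8 * π ^ 2 / 3 < lam ^ 2 / |y| ^ 3 → ∃ α : ℝ, A₁ α < 0) ∧
    (lam ^ 2 / |y| ^ 3 = 8 * π ^ 2 / 3 →
      (∀ α : ℝ, α ≠ x → 0 < A₁ α) ∧ A₁ x = 0) := by
  have hπ : (0:ℝ) < π := Real.pi_pos
  have hπ2 : (0:ℝ) < π ^ 2 := by positivity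
  have hy0 : y ≠ 0 := ne_of_lt hy
  have habs : |y| = -y := abs_of_neg hy
  have hy' : (0:ℝ) < |y| := abs_pos.mpr hy0
  have hs : ∀ α : ℝ, (‖(α : ℂ) - z₁‖) ^ 2 = (α - x) ^ 2 + y ^ 2 := by
    intro α
    rw [hz, Complex.sq_norm, Complex.normSq_apply]
    simp
    ring
  have hden : ∀ α : ℝ, (α - x) ^ 2 + y ^ 2 ≠ 0 := by
    intro α; positivity
  -- exact identity
  have key : ∀ α : ℝ, A₁ α =
      1 - 3 / (8 * π ^ 2) * (lam ^ 2 / |y| ^ 3)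
        + lam ^ 2 * (α - x) ^ 2 * (3 * (α - x) ^ 2 + 7 * y ^ 2)
            / (8 * π ^ 2 * |y| ^ 3 * ((α - x) ^ 2 + y ^ 2) ^ 2) := by
    intro α
    have h4 : (‖(α : ℂ) - z₁‖) ^ 4 = ((α - x) ^ 2 + y ^ 2) ^ 2 := by
      rw [show (4:ℕ) = 2 * 2 from rfl, pow_mul, hs]
    rw [hA α, hs α, h4, habs]
    have hden' := hden α
    have h1 : (-y) ≠ 0 := neg_ne_zero.mpr hy0
    field_simp [h1]
    ring
  have hrem : ∀ α : ℝ, 0 ≤ lam ^ 2 * (α - x) ^ 2 * (3 * (α - x) ^ 2 + 7 * y ^ 2)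
      / (8 * π ^ 2 * |y| ^ 3 * ((α - x) ^ 2 + y ^ 2) ^ 2) := by
    intro α; positivity
  have hone : 3 / (8 * π ^ 2) * (8 * π ^ 2 / 3) = 1 := by
    field_simp
  refine ⟨fun h => ⟨?_, fun α => ?_⟩, fun h => ⟨x, ?_⟩, fun h => ⟨fun α hα => ?_, ?_⟩⟩
  · have h3 : 3 / (8 * π ^ 2) * (lam ^ 2 / |y| ^ 3) < 3 / (8 * π ^ 2) * (8 * π ^ 2 / 3) :=
      mul_lt_mul_of_pos_left h (by positivity)
    rw [hone] at h3
    linarith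
  · rw [key α]
    linarith [hrem α]
  · rw [key x]
    have h3 : 3 / (8 * π ^ 2) * (8 * π ^ 2 / 3) < 3 / (8 * π ^ 2) * (lam ^ 2 / |y| ^ 3) :=
      mul_lt_mul_of_pos_left h (by positivity)
    rw [hone] at h3
    have h2 : lam ^ 2 * (x - x) ^ 2 * (3 * (x - x) ^ 2 + 7 * y ^ 2)
        / (8 * π ^ 2 * |y| ^ 3 * ((x - x) ^ 2 + y ^ 2) ^ 2) = 0 := by
      simp
    rw [h2]
    linarith
  · rw [key α, h, hone]
    have hlam : lam ≠ 0 := by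
      intro h0
      have hq : (0:ℝ) = 8 * π ^ 2 / 3 := by rw [← h, h0]; simp
      nlinarith [hπ2]
    have hα' : α - x ≠ 0 := sub_ne_zero.mpr hα
    have hpos : 0 < lam ^ 2 * (α - x) ^ 2 * (3 * (α - x) ^ 2 + 7 * y ^ 2)
        / (8 * π ^ 2 * |y| ^ 3 * ((α - x) ^ 2 + y ^ 2) ^ 2) := by positivity
    linarith
  · rw [key x, h, hone]
    simp
end
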